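/- Let N ∈ ℕ and let W⁺ be a probability weighting function. For 1 ≤ k ≤ N write h⁺_{j,k} = W⁺((k−j+1)/N) − W⁺((k−j)/N) for j = 1,…,k, and let J(k) be the transitional index for k gain outcomes. Then the sequence (J(k))_{k=1}^{N} is monotonically nondecreasing: J(k) ≤ J(k+1) for every 1 ≤ k ≤ N−1. -/

import Mathlib

open Finset

/-- An inverse S-shaped function on `[0,1]`: strictly increasing, continuously
differentiable, with a derivative strictly decreasing then strictly increasing. -/
def InverseSShaped (W : ℝ → ℝ) : Prop :=
  StrictMonoOn W (Set.Icc (0 : ℝ) 1) ∧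
  ContDiffOn ℝ 1 W (Set.Icc (0 : ℝ) 1) ∧
  ∃ x₀ ∈ Set.Icc (0 : ℝ) 1,
    StrictAntiOn (deriv W) (Set.Icc (0 : ℝ) x₀) ∧ StrictMonoOn (deriv W) (Set.Icc x₀ 1)

/-- A probability weighting function: inverse S-shaped with `W 0 = 0` and `W 1 = 1`. -/
def IsPWF (W : ℝ → ℝ) : Prop :=
  InverseSShaped W ∧ W 0 = 0 ∧ W 1 = 1

/-- Gain decision weights: `h⁺_j = W⁺((n−j+1)/N) − W⁺((n−j)/N)` for `j = 1,…,n`. -/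
noncomputable def gainW (W : ℝ → ℝ) (N n j : ℕ) : ℝ :=
  W (((n : ℝ) - j + 1) / N) - W (((n : ℝ) - j) / N)

/-- The transitional index
`J = min{ j ∈ {1,…,n} : j = n ∨ j·h⁺_{j+1} ≥ ∑_{j'≤j} h⁺_{j'} }`. -/
noncomputable def transIdx (W : ℝ → ℝ) (N n : ℕ) : ℕ :=
  sInf {j : ℕ | 1 ≤ j ∧ j ≤ n ∧
    (j = n ∨ ∑ j' ∈ Finset.Icc 1 j, gainW W N n j' ≤ (j : ℝ) * gainW W N n (j + 1))}

private lemma chain_le' (f : ℕ → ℝ) {a b : ℕ} (hab : a ≤ b)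
    (H : ∀ i, a ≤ i → i < b → f i ≤ f (i + 1)) : f a ≤ f b := by
  induction b, hab using Nat.le_induction with
  | base => exact le_rfl
  | succ b hab ih =>
    exact (ih fun i h1 h2 => H i h1 (by omega)).trans (H b hab (by omega))

private lemma chain_gt' (f : ℕ → ℝ) {a b : ℕ} (hab : a < b)
    (H : ∀ i, a ≤ i → i < b → f (i + 1) < f i) : f b < f a := by
  have hab' : a + 1 ≤ b := hab
  clear hab
  induction b, hab' using Nat.le_induction with
  | base => exact H a le_rfl (by omega)
  | succ b hab ih =>
    exact (H b (by omega) (by omega)).trans (ih fun i h1 h2 => H i h1 (by omega))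

/-- Mean value theorem tailored to subintervals of `[0,1]`. -/
private lemma mvt_aux {W : ℝ → ℝ} (hcd : ContDiffOn ℝ 1 W (Set.Icc 0 1))
    {a b : ℝ} (h0 : 0 ≤ a) (hab : a < b) (hb : b ≤ 1) :
    ∃ ξ ∈ Set.Ioo a b, deriv W ξ = (W b - W a) / (b - a) := by
  apply exists_deriv_eq_slope W hab
  · exact hcd.continuousOn.mono (Set.Icc_subset_Icc h0 hb)
  · intro x hx
    have hmem : x ∈ Set.Icc (0:ℝ) 1 := ⟨h0.trans hx.1.le, hx.2.le.trans hb⟩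
    have hnhds : Set.Icc (0:ℝ) 1 ∈ nhds x :=
      Icc_mem_nhds (h0.trans_lt hx.1) (hx.2.trans_le hb)
    exact (((hcd.differentiableOn one_ne_zero) x hmem).differentiableAt hnhds).differentiableWithinAt

/-- Core step: if the decision weight increases from `j` to `j+1`, it strictly
increases from `j+1` to `j+2`. -/
private lemma gain_core {W : ℝ → ℝ} {N : ℕ} (hcd : ContDiffOn ℝ 1 W (Set.Icc 0 1))
    {x₀ : ℝ} (hanti : StrictAntiOn (deriv W) (Set.Icc (0:ℝ) x₀))
    (hmon : StrictMonoOn (deriv W) (Set.Icc x₀ 1))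
    {n j : ℕ} (hj : 1 ≤ j) (hjn : j + 2 ≤ n) (hn : n ≤ N)
    (hle : gainW W N n j ≤ gainW W N n (j + 1)) :
    gainW W N n (j + 1) < gainW W N n (j + 2) := by
  have hN : 0 < N := by omega
  have hNR : (0:ℝ) < (N:ℝ) := by exact_mod_cast hN
  set t : ℝ := (n : ℝ) - j with ht
  have htj : (2:ℝ) ≤ t := by
    have : (j:ℝ) + 2 ≤ (n:ℝ) := by exact_mod_cast hjn
    simp only [ht]; linarith
  have htn : t + 1 ≤ (N:ℝ) := by
    have h1 : (1:ℝ) ≤ (j:ℝ) := by exact_mod_cast hj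
    have h2 : (n:ℝ) ≤ (N:ℝ) := by exact_mod_cast hn
    simp only [ht]; linarith
  have e1 : gainW W N n j = W ((t + 1) / N) - W (t / N) := by
    simp only [gainW, ht]
  have e2 : gainW W N n (j + 1) = W (t / N) - W ((t - 1) / N) := by
    simp only [gainW, ht]; push_cast; ring_nf
  have e3 : gainW W N n (j + 2) = W ((t - 1) / N) - W ((t - 2) / N) := by
    simp only [gainW, ht]; push_cast; ring_nf
  -- three MVT points
  have hd : ∀ s : ℝ, 0 ≤ s → s + 1 ≤ (N:ℝ) →
      ∃ ξ ∈ Set.Ioo (s / N) ((s + 1) / N),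
        W ((s + 1) / N) - W (s / N) = deriv W ξ * (1 / N) := by
    intro s hs hsN
    have hab : s / N < (s + 1) / N := by
      gcongr
      linarith
    have hb1 : (s + 1) / N ≤ 1 := by
      rw [div_le_one hNR]; exact hsN
    have ha0 : 0 ≤ s / N := div_nonneg hs hNR.le
    obtain ⟨ξ, hξ, hξeq⟩ := mvt_aux hcd ha0 hab hb1
    refine ⟨ξ, hξ, ?_⟩
    have hdiff : (s + 1) / N - s / N = 1 / N := by field_simp; ring
    rw [hξeq, hdiff]
    field_simp
  obtain ⟨ξ₃, hξ₃, he₃⟩ := hd (t - 2) (by linarith) (by linarith)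
  obtain ⟨ξ₂, hξ₂, he₂⟩ := hd (t - 1) (by linarith) (by linarith)
  obtain ⟨ξ₁, hξ₁, he₁⟩ := hd t (by linarith) (by linarith)
  rw [e2, e3]
  have hts : t - 2 + 1 = t - 1 := by ring
  have hts' : t - 1 + 1 = t := by ring
  rw [hts] at he₃ hξ₃
  rw [hts'] at he₂ hξ₂
  -- inequalities between deriv values
  have hd12 : deriv W ξ₁ ≤ deriv W ξ₂ := by
    rw [e1, e2] at hle
    rw [he₁, he₂] at hle
    have hNinv : (0:ℝ) < 1 / N := by positivity
    exact le_of_mul_le_mul_right (by linarith) hNinv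
  have hξ21 : ξ₂ < ξ₁ := lt_trans hξ₂.2 hξ₁.1
  have hξ1le : ξ₁ ≤ 1 := by
    have := hξ₁.2
    have : ξ₁ < (t + 1) / N := this
    have h1 : (t + 1) / N ≤ 1 := by rw [div_le_one hNR]; linarith
    linarith
  have hξ3pos : 0 ≤ ξ₃ := by
    have h0 : 0 ≤ (t - 2) / N := div_nonneg (by linarith) hNR.le
    linarith [hξ₃.1]
  have hξ2pos : 0 ≤ ξ₂ := by
    have h0 : 0 ≤ (t - 1) / N := div_nonneg (by linarith) hNR.le
    linarith [hξ₂.1]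
  -- ξ₂ must be below x₀
  have hx₀ξ₂ : ξ₂ < x₀ := by
    by_contra hcon
    push_neg at hcon
    have := hmon ⟨hcon, by linarith⟩ ⟨by linarith, hξ1le⟩ hξ21
    linarith
  have hξ32 : ξ₃ < ξ₂ := lt_trans hξ₃.2 hξ₂.1
  have hkey : deriv W ξ₂ < deriv W ξ₃ :=
    hanti ⟨hξ3pos, by linarith⟩ ⟨hξ2pos, hx₀ξ₂.le⟩ hξ32
  rw [he₂, he₃]
  have hNinv : (0:ℝ) < 1 / N := by positivity
  exact mul_lt_mul_of_pos_right hkey hNinv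

/-- The main step: the transitional condition at level `k+1` transfers to level `k`. -/
private lemma main_step {W : ℝ → ℝ} {N k J : ℕ}
    (hcd : ContDiffOn ℝ 1 W (Set.Icc 0 1))
    {x₀ : ℝ} (hanti : StrictAntiOn (deriv W) (Set.Icc (0:ℝ) x₀))
    (hmon : StrictMonoOn (deriv W) (Set.Icc x₀ 1))
    (hN : k + 1 ≤ N) (hJ1 : 1 ≤ J) (hJk : J < k)
    (C : ∑ j' ∈ Finset.Icc 1 J, gainW W N (k + 1) j' ≤
      (J : ℝ) * gainW W N (k + 1) (J + 1)) :
    ∑ j' ∈ Finset.Icc 1 J, gainW W N k j' ≤ (J : ℝ) * gainW W N k (J + 1) := by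
  set h : ℕ → ℝ := gainW W N (k + 1) with hh
  have shift : ∀ j : ℕ, gainW W N k j = h (j + 1) := by
    intro j
    simp only [hh, gainW]
    push_cast
    ring_nf
  have core' : ∀ i, 1 ≤ i → i + 2 ≤ k + 1 → h i ≤ h (i + 1) → h (i + 1) < h (i + 2) :=
    fun i a b c => gain_core hcd hanti hmon a b hN c
  have mono_from : ∀ a, 1 ≤ a → h a ≤ h (a + 1) →
      ∀ i, a ≤ i → i ≤ k → h i ≤ h (i + 1) := by
    intro a ha hstep i hai hik
    induction i, hai using Nat.le_induction with
    | base => exact hstep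
    | succ i hai ih =>
      exact (core' i (by omega) (by omega) (ih (by omega))).le
  -- F1 : h (J+1) ≤ h (J+2)
  have hF1 : h (J + 1) ≤ h (J + 2) := by
    by_contra hlt
    push_neg at hlt
    have hdec : ∀ i, 1 ≤ i → i < J + 1 → h (i + 1) < h i := by
      intro i h1 h2
      by_contra hge
      push_neg at hge
      have := mono_from i h1 hge (J + 1) (by omega) (by omega)
      exact absurd this (not_le.2 hlt)
    have hch : ∀ i, 1 ≤ i → i ≤ J → h (J + 1) < h i := fun i h1 h2 =>
      chain_gt' h (show i < J + 1 by omega) (fun m hm1 hm2 => hdec m (by omega) hm2)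
    have hsum : (J : ℝ) * h (J + 1) < ∑ j' ∈ Finset.Icc 1 J, h j' := by
      have hlt' : ∑ _j' ∈ Finset.Icc 1 J, h (J + 1) < ∑ j' ∈ Finset.Icc 1 J, h j' := by
        apply Finset.sum_lt_sum_of_nonempty ⟨1, by simp [hJ1]⟩
        intro i hi
        rw [Finset.mem_Icc] at hi
        exact hch i hi.1 hi.2
      have hcard : (Finset.Icc 1 J).card = J := by rw [Nat.card_Icc]; omega
      rw [Finset.sum_const, hcard, nsmul_eq_mul] at hlt'
      exact hlt'
    linarith
  simp only [shift]
  by_cases hc : h (J + 1) ≤ h 1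
  · -- sum identity route
    have e1 : ∑ j' ∈ Finset.Icc 1 J, h (j' + 1) = ∑ j' ∈ Finset.Ioc 1 (J + 1), h j' := by
      rw [← Finset.Icc_add_one_left_eq_Ioc]
      show ∑ j' ∈ Finset.Icc 1 J, h (j' + 1) = ∑ j' ∈ Finset.Icc (1 + 1) (J + 1), h j'
      rw [← Finset.map_add_right_Icc, Finset.sum_map]
      rfl
    have e2 : h 1 + ∑ j' ∈ Finset.Ioc 1 (J + 1), h j' = ∑ j' ∈ Finset.Icc 1 (J + 1), h j' :=
      Finset.add_sum_Ioc_eq_sum_Icc (by omega)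
    have e3 : ∑ j' ∈ Finset.Icc 1 (J + 1), h j'
        = (∑ j' ∈ Finset.Icc 1 J, h j') + h (J + 1) :=
      Finset.sum_Icc_succ_top (by omega) _
    have hmul : (J : ℝ) * h (J + 1) ≤ (J : ℝ) * h (J + 2) :=
      mul_le_mul_of_nonneg_left hF1 (Nat.cast_nonneg J)
    have : ∑ j' ∈ Finset.Icc 1 J, h (j' + 1)
        = (∑ j' ∈ Finset.Icc 1 J, h j') + h (J + 1) - h 1 := by
      rw [e1]; linarith [e2, e3]
    rw [this]
    calc (∑ j' ∈ Finset.Icc 1 J, h j') + h (J + 1) - h 1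
        ≤ (J : ℝ) * h (J + 1) + h (J + 1) - h 1 := by linarith
      _ ≤ (J : ℝ) * h (J + 1) := by linarith
      _ ≤ (J : ℝ) * h (J + 1 + 1) := by
          have : J + 1 + 1 = J + 2 := rfl
          rw [this]; exact hmul
  · -- pointwise route
    push_neg at hc
    have hex : ∃ j₀, 1 ≤ j₀ ∧ j₀ ≤ J ∧ h j₀ ≤ h (j₀ + 1) := by
      by_contra hno
      push_neg at hno
      have := chain_gt' h (show (1:ℕ) < J + 1 by omega)
        (fun i h1 h2 => hno i h1 (by omega))
      linarith
    set T : Set ℕ := {j | 1 ≤ j ∧ j ≤ J ∧ h j ≤ h (j + 1)} with hT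
    have hTne : T.Nonempty := hex
    set j₀ : ℕ := sInf T with hj₀def
    have hj₀mem : j₀ ∈ T := Nat.sInf_mem hTne
    obtain ⟨hj₀1, hj₀J, hj₀step⟩ := hj₀mem
    have hpt : ∀ j, 2 ≤ j → j ≤ J + 1 → h j ≤ h (J + 1) := by
      intro j hj2 hjJ
      rcases le_or_gt j j₀ with hcase | hcase
      · have hlt : h j < h 1 := by
          apply chain_gt' h (show 1 < j by omega)
          intro i hi1 hi2
          by_contra hge
          push_neg at hge
          have hiT : i ∈ T := ⟨hi1, by omega, hge⟩
          exact absurd hiT (Nat.notMem_of_lt_sInf (by omega))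
        linarith
      · apply chain_le' h (show j ≤ J + 1 from hjJ)
        intro i hi1 hi2
        exact mono_from j₀ hj₀1 hj₀step i (by omega) (by omega)
    calc ∑ j' ∈ Finset.Icc 1 J, h (j' + 1)
        ≤ ∑ _j' ∈ Finset.Icc 1 J, h (J + 2) := by
          apply Finset.sum_le_sum
          intro i hi
          rw [Finset.mem_Icc] at hi
          exact (hpt (i + 1) (by omega) (by omega)).trans hF1
      _ = (J : ℝ) * h (J + 1 + 1) := by
          have hcard : (Finset.Icc 1 J).card = J := by rw [Nat.card_Icc]; omega
          rw [Finset.sum_const, hcard, nsmul_eq_mul]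

/-- the transitional indices `(J(k))_{k=1}^{N}` form a monotonically
nondecreasing sequence. -/
theorem transIdx_monotone (W : ℝ → ℝ) (N : ℕ) (hW : IsPWF W) :
    ∀ k : ℕ, 1 ≤ k → k ≤ N - 1 → transIdx W N k ≤ transIdx W N (k + 1) := by
  obtain ⟨⟨hmono, hcd, x₀, hx₀, hanti, hmon⟩, h0, h1⟩ := hW
  intro k hk hkN
  have hN : k + 1 ≤ N := by omega
  set S : Set ℕ := {j : ℕ | 1 ≤ j ∧ j ≤ k + 1 ∧
    (j = k + 1 ∨ ∑ j' ∈ Finset.Icc 1 j, gainW W N (k + 1) j' ≤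
      (j : ℝ) * gainW W N (k + 1) (j + 1))} with hS
  have hSmem : (k + 1) ∈ S := ⟨by omega, le_rfl, Or.inl rfl⟩
  have hJdef : transIdx W N (k + 1) = sInf S := rfl
  have hJmem : transIdx W N (k + 1) ∈ S := by
    rw [hJdef]; exact Nat.sInf_mem ⟨k + 1, hSmem⟩
  set J : ℕ := transIdx W N (k + 1) with hJ
  obtain ⟨hJ1, hJk1, hJor⟩ := hJmem
  rcases le_or_gt k J with hcase | hcase
  · have hkS : k ∈ {j : ℕ | 1 ≤ j ∧ j ≤ k ∧
        (j = k ∨ ∑ j' ∈ Finset.Icc 1 j, gainW W N k j' ≤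
          (j : ℝ) * gainW W N k (j + 1))} := ⟨hk, le_rfl, Or.inl rfl⟩
    exact le_trans (Nat.sInf_le hkS) hcase
  · have hC : ∑ j' ∈ Finset.Icc 1 J, gainW W N (k + 1) j' ≤
        (J : ℝ) * gainW W N (k + 1) (J + 1) := by
      rcases hJor with heq | hC
      · omega
      · exact hC
    apply Nat.sInf_le
    exact ⟨hJ1, by omega, Or.inr (main_step hcd hanti hmon hN hJ1 hcase hC)⟩
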